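/- Let K be a finite simplicial complex with vertex set V, f, g : V → ℝ, and h : V → ℝ nowhere vanishing. Then for each n ≥ 0 the chain isomorphism φ(σ) = (Π_{v∈σ} h(v))⁻¹ σ induces a linear isomorphism φ* : Hₙ(K, f, g; ℝ) → Hₙ(K, fh, gh; ℝ) between the f-weighted and (fh)-weighted homology groups, defined by φ*([c]) = [φ(c)]. -/

import Mathlib

open Finset

variable {V : Type} [Fintype V] [LinearOrder V]

/-- `K` is an abstract simplicial complex: simplices are nonempty and
`K` is closed under nonempty subsets. -/
def IsComplex (K : Finset (Finset V)) : Prop :=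
  ∀ σ ∈ K, σ.Nonempty ∧ ∀ τ ⊆ σ, τ.Nonempty → τ ∈ K

/-- Coefficient of `τ` in the `f`-weighted boundary of the simplex `σ`:
`∂ᶠ σ = Σᵢ (-1)ⁱ f(vᵢ) (σ \ vᵢ)` with the vertices of `σ` in increasing order. -/
noncomputable def bdCoef (f : V → ℝ) (τ σ : Finset V) : ℝ :=
  ∑ i : Fin (σ.sort (· ≤ ·)).length,
    if τ = σ.erase ((σ.sort (· ≤ ·)).get i)
    then (-1 : ℝ) ^ (i : ℕ) * f ((σ.sort (· ≤ ·)).get i) else 0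

/-- The `f`-weighted boundary operator on the free vector space on all simplices. -/
noncomputable def wbd (f : V → ℝ) : (Finset V → ℝ) →ₗ[ℝ] (Finset V → ℝ) :=
  (Matrix.of (bdCoef f)).mulVecLin

/-- `Cₙ(K;ℝ)`: the span of the `n`-simplices of `K`. -/
noncomputable def chainSp (K : Finset (Finset V)) (n : ℕ) : Submodule ℝ (Finset V → ℝ) :=
  Submodule.span ℝ {x | ∃ σ ∈ K, σ.card = n + 1 ∧ x = Pi.single σ (1 : ℝ)}

/-- The `g`-weighted bilinear form `⟨σ,τ⟩_g = g(σ)g(τ)δ(σ,τ)`, extended bilinearly. -/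
noncomputable def wB (g : V → ℝ) (a b : Finset V → ℝ) : ℝ :=
  ∑ σ : Finset V, (∏ v ∈ σ, g v) ^ 2 * a σ * b σ

/-- `K_g^×`: the simplices of `K` whose `g`-weight is nonzero. -/
noncomputable def posPart (K : Finset (Finset V)) (g : V → ℝ) : Finset (Finset V) :=
  K.filter (fun σ => (∏ v ∈ σ, g v) ≠ 0)

/-- `n`-cycles of the `f`-weighted chain complex of `K`. -/
noncomputable def cycles (K : Finset (Finset V)) (f : V → ℝ) (n : ℕ) :
    Submodule ℝ (Finset V → ℝ) :=
  chainSp K n ⊓ LinearMap.ker (wbd f)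

/-- `n`-boundaries of the `f`-weighted chain complex of `K`. -/
noncomputable def bdries (K : Finset (Finset V)) (f : V → ℝ) (n : ℕ) :
    Submodule ℝ (Finset V → ℝ) :=
  Submodule.map (wbd f) (chainSp K (n + 1))

/-- The `n`-th `f`-weighted homology `Hₙ(K,f;ℝ) = Ker ∂ₙᶠ / Im ∂ₙ₊₁ᶠ`. -/
noncomputable abbrev wH (K : Finset (Finset V)) (f : V → ℝ) (n : ℕ) :=
  ↥(cycles K f n) ⧸ Submodule.comap (cycles K f n).subtype (bdries K f n)

/-- The rescaling chain map `σ ↦ (Π_{v∈σ} h(v))⁻¹ σ`. -/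
noncomputable def resc (h : V → ℝ) : (Finset V → ℝ) →ₗ[ℝ] (Finset V → ℝ) :=
  (Matrix.diagonal fun σ => (∏ v ∈ σ, h v)⁻¹).mulVecLin

section Aux10

lemma resc_apply (h : V → ℝ) (x : Finset V → ℝ) (σ : Finset V) :
    resc h x σ = (∏ v ∈ σ, h v)⁻¹ * x σ := by
  simp [resc, Matrix.mulVecLin_apply, Matrix.mulVec_diagonal]

lemma wbd_apply (f : V → ℝ) (x : Finset V → ℝ) (τ : Finset V) :
    wbd f x τ = ∑ σ : Finset V, bdCoef f τ σ * x σ := by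
  simp [wbd, Matrix.mulVecLin_apply, Matrix.mulVec, dotProduct, Matrix.of_apply]

lemma bdCoef_mul (f h : V → ℝ) (hh : ∀ v : V, h v ≠ 0) (τ σ : Finset V) :
    bdCoef (fun v => f v * h v) τ σ * (∏ v ∈ σ, h v)⁻¹
      = (∏ v ∈ τ, h v)⁻¹ * bdCoef f τ σ := by
  unfold bdCoef
  rw [Finset.sum_mul, Finset.mul_sum]
  refine Finset.sum_congr rfl fun i _ => ?_
  by_cases hc : τ = σ.erase ((σ.sort (· ≤ ·)).get i)
  · set v := (σ.sort (· ≤ ·)).get i with hv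
    have hvmem : v ∈ σ := (Finset.mem_sort _).1 (List.get_mem _ i)
    have hprod : ∏ w ∈ σ, h w = h v * ∏ w ∈ σ.erase v, h w :=
      (Finset.mul_prod_erase σ h hvmem).symm
    have herase : (∏ w ∈ σ.erase v, h w) ≠ 0 :=
      Finset.prod_ne_zero_iff.2 fun w _ => hh w
    have hv0 : h v ≠ 0 := hh v
    rw [if_pos hc, if_pos hc, hc, hprod]
    field_simp
  · rw [if_neg hc, if_neg hc]
    simp

lemma wbd_resc (f h : V → ℝ) (hh : ∀ v : V, h v ≠ 0) :
    (wbd (fun v => f v * h v)).comp (resc h) = (resc h).comp (wbd f) := by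
  apply LinearMap.ext; intro x
  funext τ
  simp only [LinearMap.comp_apply]
  rw [wbd_apply, resc_apply, wbd_apply, Finset.mul_sum]
  refine Finset.sum_congr rfl fun σ _ => ?_
  rw [resc_apply, ← mul_assoc, bdCoef_mul f h hh, mul_assoc]

lemma resc_resc (h₁ h₂ : V → ℝ) (hmul : ∀ v : V, h₁ v * h₂ v = 1)
    (x : Finset V → ℝ) : resc h₁ (resc h₂ x) = x := by
  funext σ
  rw [resc_apply, resc_apply, ← mul_assoc, ← mul_inv]
  rw [← Finset.prod_mul_distrib]
  have : ∏ v ∈ σ, h₁ v * h₂ v = 1 := Finset.prod_eq_one fun v _ => hmul v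
  rw [this]
  simp

/-- `resc h` as a linear equivalence (for `h` nowhere zero). -/
noncomputable def rescEquiv (h : V → ℝ) (hh : ∀ v : V, h v ≠ 0) :
    (Finset V → ℝ) ≃ₗ[ℝ] (Finset V → ℝ) :=
  LinearEquiv.ofLinear (resc h) (resc fun v => (h v)⁻¹)
    (LinearMap.ext fun x => resc_resc _ _ (fun v => mul_inv_cancel₀ (hh v)) x)
    (LinearMap.ext fun x => resc_resc _ _ (fun v => inv_mul_cancel₀ (hh v)) x)

lemma rescEquiv_coe (h : V → ℝ) (hh : ∀ v : V, h v ≠ 0) :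
    (rescEquiv h hh : (Finset V → ℝ) →ₗ[ℝ] (Finset V → ℝ)) = resc h := rfl

lemma resc_single (h : V → ℝ) (σ : Finset V) :
    resc h (Pi.single σ (1 : ℝ)) = (∏ v ∈ σ, h v)⁻¹ • (Pi.single σ (1 : ℝ) : Finset V → ℝ) := by
  funext τ
  rw [Pi.smul_apply, resc_apply]
  rcases eq_or_ne τ σ with rfl | hne
  · simp
  · simp [Pi.single_apply, hne]

lemma map_resc_chainSp (K : Finset (Finset V)) (h : V → ℝ)
    (hh : ∀ v : V, h v ≠ 0) (n : ℕ) :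
    Submodule.map (resc h) (chainSp K n) = chainSp K n := by
  unfold chainSp
  rw [Submodule.map_span]
  apply le_antisymm
  · rw [Submodule.span_le]
    rintro _ ⟨x, ⟨σ, hσ, hcard, rfl⟩, rfl⟩
    rw [resc_single]
    exact Submodule.smul_mem _ _ (Submodule.subset_span ⟨σ, hσ, hcard, rfl⟩)
  · rw [Submodule.span_le]
    rintro _ ⟨σ, hσ, hcard, rfl⟩
    have hne : (∏ v ∈ σ, h v) ≠ 0 := Finset.prod_ne_zero_iff.2 fun v _ => hh v
    have : Pi.single σ (1 : ℝ) = (∏ v ∈ σ, h v) • resc h (Pi.single σ (1 : ℝ)) := by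
      rw [resc_single, smul_smul, mul_inv_cancel₀ hne, one_smul]
    rw [this]
    exact Submodule.smul_mem _ _
      (Submodule.subset_span ⟨Pi.single σ (1 : ℝ), ⟨σ, hσ, hcard, rfl⟩, rfl⟩)

lemma funext_fhh (f h : V → ℝ) (hh : ∀ v : V, h v ≠ 0) :
    (fun v => (f v * h v) * (h v)⁻¹) = f := by
  funext v; rw [mul_assoc, mul_inv_cancel₀ (hh v), mul_one]

lemma map_resc_cycles (K : Finset (Finset V)) (f h : V → ℝ)
    (hh : ∀ v : V, h v ≠ 0) (n : ℕ) :
    Submodule.map (resc h) (cycles K f n) = cycles K (fun v => f v * h v) n := by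
  have hh' : ∀ v : V, (h v)⁻¹ ≠ 0 := fun v => inv_ne_zero (hh v)
  ext x
  simp only [Submodule.mem_map, cycles, Submodule.mem_inf, LinearMap.mem_ker]
  constructor
  · rintro ⟨y, ⟨hy1, hy2⟩, rfl⟩
    constructor
    · rw [← map_resc_chainSp K h hh n]
      exact Submodule.mem_map_of_mem hy1
    · have := LinearMap.congr_fun (wbd_resc f h hh) y
      simp only [LinearMap.comp_apply] at this
      rw [this, hy2, map_zero]
  · rintro ⟨hx1, hx2⟩
    refine ⟨resc (fun v => (h v)⁻¹) x, ⟨?_, ?_⟩, ?_⟩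
    · rw [← map_resc_chainSp K (fun v => (h v)⁻¹) hh' n]
      exact Submodule.mem_map_of_mem hx1
    · have := LinearMap.congr_fun
        (wbd_resc (fun v => f v * h v) (fun v => (h v)⁻¹) hh') x
      simp only [LinearMap.comp_apply] at this
      rw [funext_fhh f h hh] at this
      rw [this, hx2, map_zero]
    · exact resc_resc _ _ (fun v => mul_inv_cancel₀ (hh v)) x

lemma map_resc_bdries (K : Finset (Finset V)) (f h : V → ℝ)
    (hh : ∀ v : V, h v ≠ 0) (n : ℕ) :
    Submodule.map (resc h) (bdries K f n) = bdries K (fun v => f v * h v) n := by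
  unfold bdries
  rw [← Submodule.map_comp, ← wbd_resc f h hh, Submodule.map_comp,
    map_resc_chainSp K h hh (n + 1)]

end Aux10

/-- The chain isomorphism `φ(σ) = (Π_{v∈σ} h(v))⁻¹ σ` induces a linear isomorphism
`φ* : Hₙ(K,f,g;ℝ) → Hₙ(K,fh,gh;ℝ)`, `φ*([c]) = [φ(c)]`. -/
theorem stmt10 (K : Finset (Finset V)) (hK : IsComplex K) (f g h : V → ℝ)
    (hh : ∀ v : V, h v ≠ 0) (n : ℕ) :
    ∃ e : wH K f n ≃ₗ[ℝ] wH K (fun v => f v * h v) n,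
      ∀ (c : ↥(cycles K f n)) (c' : ↥(cycles K (fun v => f v * h v) n)),
        resc h (c : Finset V → ℝ) = (c' : Finset V → ℝ) →
        e (Submodule.Quotient.mk c) = Submodule.Quotient.mk c' := by
  set f' : V → ℝ := fun v => f v * h v with hf'
  set e0 := rescEquiv h hh with he0
  have hcoe : (e0 : (Finset V → ℝ) →ₗ[ℝ] (Finset V → ℝ)) = resc h := rfl
  have hcy : Submodule.map (e0 : (Finset V → ℝ) →ₗ[ℝ] (Finset V → ℝ))
      (cycles K f n) = cycles K f' n := by
    rw [hcoe]; exact map_resc_cycles K f h hh n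
  set e' : ↥(cycles K f n) ≃ₗ[ℝ] ↥(cycles K f' n) :=
    LinearEquiv.ofSubmodules e0 _ _ hcy with he'
  have he'app : ∀ c : ↥(cycles K f n), (e' c : Finset V → ℝ) = resc h (c : Finset V → ℝ) :=
    fun c => LinearEquiv.ofSubmodules_apply e0 hcy c
  have hbd : Submodule.map (resc h) (bdries K f n) = bdries K f' n :=
    map_resc_bdries K f h hh n
  have hmap : Submodule.map (e' : ↥(cycles K f n) →ₗ[ℝ] ↥(cycles K f' n))
      (Submodule.comap (cycles K f n).subtype (bdries K f n))
      = Submodule.comap (cycles K f' n).subtype (bdries K f' n) := by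
    ext x
    simp only [Submodule.mem_map, Submodule.mem_comap, Submodule.subtype_apply]
    constructor
    · rintro ⟨y, hy, rfl⟩
      rw [LinearEquiv.coe_coe, he'app y, ← hbd]
      exact Submodule.mem_map_of_mem hy
    · intro hx
      rw [← hbd] at hx
      obtain ⟨z, hz, hzx⟩ := hx
      have hz' : z ∈ cycles K f n := by
        have : resc h z ∈ cycles K f' n := hzx ▸ x.2
        rw [← hcy] at this
        obtain ⟨w, hw, hwz⟩ := this
        rw [hcoe] at hwz
        have : w = z := by
          have := congrArg (resc fun v => (h v)⁻¹) hwz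
          rwa [resc_resc _ _ (fun v => inv_mul_cancel₀ (hh v)) w,
            resc_resc _ _ (fun v => inv_mul_cancel₀ (hh v)) z] at this
        rwa [← this]
      refine ⟨⟨z, hz'⟩, hz, ?_⟩
      apply Subtype.ext
      rw [LinearEquiv.coe_coe, he'app]
      exact hzx
  refine ⟨Submodule.Quotient.equiv _ _ e' hmap, ?_⟩
  intro c c' hcc
  have : e' c = c' := by
    apply Subtype.ext
    rw [he'app c, hcc]
  rw [← this]
  rfl
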